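/- Let q : ℝ → ℝ be the restriction to ℝ of an entire function (i.e. there exists F : ℂ → ℂ differentiable on all of ℂ with F(x) = q(x) for all real x). Then for every t ∈ ℝ the series Σ_{n=0}^{∞} q^{(2n)}(t)/(2n+1)! converges absolutely and Σ_{n=0}^{∞} q^{(2n)}(t)/(2n+1)! = (1/2)·∫_{t−1}^{t+1} q(τ) dτ. -/

import Mathlib

open MeasureTheory

theorem stmt8 (q : ℝ → ℝ)
    (hq : ∃ F : ℂ → ℂ, Differentiable ℂ F ∧ ∀ x : ℝ, F x = (q x : ℂ)) (t : ℝ) :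
    Summable (fun n : ℕ => |iteratedDeriv (2 * n) q t / ((2 * n + 1).factorial : ℝ)|) ∧
    ∑' n : ℕ, iteratedDeriv (2 * n) q t / ((2 * n + 1).factorial : ℝ)
      = (1 / 2) * ∫ τ in (t - 1)..(t + 1), q τ := by
  obtain ⟨F, hF, hFq⟩ := hq
  -- Step 1: iterated derivatives of F restricted to ℝ are those of q
  have key : ∀ n : ℕ, Differentiable ℂ (iteratedDeriv n F) ∧
      ∀ x : ℝ, iteratedDeriv n F x = (Complex.ofReal (iteratedDeriv n q x)) := by
    intro n
    induction n with
    | zero => simpa using ⟨hF, hFq⟩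
    | succ n ih =>
      obtain ⟨hG, hGx⟩ := ih
      set G := iteratedDeriv n F with hGdef
      have hG' : Differentiable ℂ (deriv G) :=
        (Complex.analyticOnNhd_univ_iff_differentiable.1
          (Complex.analyticOnNhd_univ_iff_differentiable.2 hG).deriv)
      constructor
      · rw [iteratedDeriv_succ]; exact hG'
      · intro x
        have hd : HasDerivAt G (deriv G x) x := (hG x).hasDerivAt
        have h1 : HasDerivAt (fun y : ℝ => (G y).re) (deriv G x).re x :=
          hd.real_of_complex
        have he : (fun y : ℝ => (G y).re) = iteratedDeriv n q := by
          funext y; rw [hGx y]; simp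
        rw [he] at h1
        have him : (deriv G x).im = 0 := by
          have hd2 : HasDerivAt (fun z => -Complex.I * G z)
              (-Complex.I * deriv G x) x := hd.const_mul _
          have h2 : HasDerivAt (fun y : ℝ => (-Complex.I * G y).re)
              (-Complex.I * deriv G x).re x := hd2.real_of_complex
          have he2 : (fun y : ℝ => (-Complex.I * G y).re) = fun _ : ℝ => (0 : ℝ) := by
            funext y; rw [hGx y]; simp
          rw [he2] at h2
          have h3 : (-Complex.I * deriv G x).re = 0 :=
            h2.unique (hasDerivAt_const x 0)
          simpa [Complex.mul_re] using h3
        rw [iteratedDeriv_succ, iteratedDeriv_succ, h1.deriv]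
        exact Complex.ext (by simp; rfl) (by simp [him]; exact him)
  set d : ℕ → ℝ := fun n => iteratedDeriv n q t with hd_def
  -- Step 2: Taylor series of F at t with real coefficients
  have hsum : ∀ z : ℂ, HasSum (fun n : ℕ => ((n.factorial : ℂ))⁻¹ • (z - t) ^ n • (d n : ℂ)) (F z) := by
    intro z
    have h := Complex.hasSum_taylorSeries_of_entire hF (t : ℂ) z
    refine h.congr_fun fun n => ?_
    rw [(key n).2 t]
  -- Step 3: coefficient bound from convergence at t+2
  obtain ⟨C, hC⟩ : ∃ C : ℝ, ∀ n : ℕ,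
      ‖((n.factorial : ℂ))⁻¹ • ((t + 2 : ℂ) - t) ^ n • (d n : ℂ)‖ ≤ C := by
    have h := (hsum ((t : ℂ) + 2)).summable
    have h0 : Filter.Tendsto (fun n : ℕ =>
        ‖((n.factorial : ℂ))⁻¹ • ((t + 2 : ℂ) - t) ^ n • (d n : ℂ)‖)
        Filter.atTop (nhds 0) := by
      simpa using h.tendsto_atTop_zero.norm
    obtain ⟨C, hC⟩ := h0.bddAbove_range
    exact ⟨C, fun n => hC (Set.mem_range_self n)⟩
  have hbd : ∀ n : ℕ, |d n| / (n.factorial : ℝ) ≤ C / 2 ^ n := by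
    intro n
    have h := hC n
    have h2 : ((t + 2 : ℂ) - t) = 2 := by ring
    rw [h2] at h
    have hn : (0 : ℝ) < (n.factorial : ℝ) := by positivity
    have : (n.factorial : ℝ)⁻¹ * (2 ^ n * |d n|) ≤ C := by
      simpa [norm_smul, Complex.norm_natCast, abs_of_pos hn] using h
    rw [div_le_div_iff₀ hn (by positivity)]
    calc |d n| * 2 ^ n = (n.factorial : ℝ) * ((n.factorial : ℝ)⁻¹ * (2 ^ n * |d n|)) := by
          field_simp
      _ ≤ (n.factorial : ℝ) * C := mul_le_mul_of_nonneg_left this (le_of_lt hn)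
      _ = C * (n.factorial : ℝ) := mul_comm _ _
  have hC0 : 0 ≤ C := le_trans (norm_nonneg _) (hC 0)
  -- Part 1: summability
  have habs : ∀ n : ℕ, |d (2 * n) / (((2 * n + 1).factorial : ℝ))| ≤ C * (1 / 4) ^ n := by
    intro n
    have hf1 : (0 : ℝ) < ((2 * n).factorial : ℝ) := by positivity
    have hf2 : (0 : ℝ) < (((2 * n + 1).factorial : ℝ)) := by positivity
    have hle : ((2 * n).factorial : ℝ) ≤ (((2 * n + 1).factorial : ℝ)) := by
      exact_mod_cast Nat.factorial_le (Nat.le_succ _)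
    have h1 : |d (2 * n) / (((2 * n + 1).factorial : ℝ))|
        = |d (2 * n)| / (((2 * n + 1).factorial : ℝ)) := by
      rw [abs_div, abs_of_pos hf2]
    rw [h1]
    calc |d (2 * n)| / (((2 * n + 1).factorial : ℝ))
        ≤ |d (2 * n)| / ((2 * n).factorial : ℝ) :=
          div_le_div_of_nonneg_left (abs_nonneg _) hf1 hle
      _ ≤ C / 2 ^ (2 * n) := hbd (2 * n)
      _ = C * (1 / 4) ^ n := by
          rw [pow_mul, one_div_pow, ← div_eq_mul_one_div]; norm_num
  have hsummable : Summable (fun n : ℕ => |d (2 * n) / (((2 * n + 1).factorial : ℝ))|) := by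
    refine Summable.of_nonneg_of_le (fun n => abs_nonneg _) habs ?_
    exact (summable_geometric_of_lt_one (by norm_num) (by norm_num)).mul_left C
  refine ⟨hsummable, ?_⟩
  -- Part 2: the identity
  have hqs : ∀ τ : ℝ, HasSum (fun n : ℕ => ((n.factorial : ℝ))⁻¹ * (τ - t) ^ n * d n) (q τ) := by
    intro τ
    have h := hsum (τ : ℂ)
    rw [hFq] at h
    rw [← Complex.hasSum_ofReal]
    refine h.congr_fun fun n => ?_
    simp only [smul_eq_mul]
    push_cast
    ring
  have ht : t - 1 ≤ t + 1 := by linarith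
  set f : ℕ → ℝ → ℝ := fun n τ => ((n.factorial : ℝ))⁻¹ * (τ - t) ^ n * d n with hf_def
  have hqeq : (fun τ => q τ) = fun τ => ∑' n, f n τ :=
    funext fun τ => ((hqs τ).tsum_eq).symm
  have hScont : ∀ n, Continuous (f n) := by
    intro n; fun_prop
  have hint : ∀ n : ℕ, IntegrableOn (f n) (Set.Ioc (t - 1) (t + 1)) volume :=
    fun n => (hScont n).integrableOn_Ioc
  have hvol : (volume (Set.Ioc (t - 1) (t + 1))).toReal = 2 := by
    rw [Real.volume_Ioc]
    rw [ENNReal.toReal_ofReal (by linarith)]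
    ring
  have hnormbd : ∀ n : ℕ, ∀ τ ∈ Set.Ioc (t - 1) (t + 1), ‖‖f n τ‖‖ ≤ C * (1 / 2) ^ n := by
    intro n τ hτ
    rw [norm_norm]
    have hτt : |τ - t| ≤ 1 := by
      rw [abs_le]; constructor <;> [linarith [hτ.1]; linarith [hτ.2]]
    have : ‖f n τ‖ = ((n.factorial : ℝ))⁻¹ * |τ - t| ^ n * |d n| := by
      simp [hf_def, abs_mul, abs_pow, abs_of_pos (show (0:ℝ) < ((n.factorial : ℝ))⁻¹ by positivity)]
    rw [this]
    have h1 : |τ - t| ^ n ≤ 1 := pow_le_one₀ (abs_nonneg _) hτt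
    have h2 : |d n| / (n.factorial : ℝ) ≤ C / 2 ^ n := hbd n
    have hn : (0 : ℝ) < (n.factorial : ℝ) := by positivity
    have h3 : ((n.factorial : ℝ))⁻¹ * |d n| ≤ C / 2 ^ n := by
      rw [mul_comm, ← div_eq_mul_inv]; exact h2
    calc ((n.factorial : ℝ))⁻¹ * |τ - t| ^ n * |d n|
        ≤ ((n.factorial : ℝ))⁻¹ * 1 * |d n| := by
          apply mul_le_mul_of_nonneg_right _ (abs_nonneg _)
          exact mul_le_mul_of_nonneg_left h1 (by positivity)
      _ = ((n.factorial : ℝ))⁻¹ * |d n| := by ring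
      _ ≤ C / 2 ^ n := h3
      _ = C * (1 / 2) ^ n := by rw [div_pow, one_pow]; ring
  have hsumint : Summable (fun n : ℕ => ∫ τ in Set.Ioc (t - 1) (t + 1), ‖f n τ‖) := by
    refine Summable.of_nonneg_of_le
      (fun n => integral_nonneg fun τ => norm_nonneg _) (fun n => ?_)
      (((summable_geometric_of_lt_one (r := (1:ℝ)/2) (by norm_num) (by norm_num)).mul_left C).mul_right 2)
    have := norm_setIntegral_le_of_norm_le_const
      (s := Set.Ioc (t - 1) (t + 1)) (μ := volume)
      (f := fun τ => ‖f n τ‖) (C := C * (1 / 2) ^ n)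
      measure_Ioc_lt_top (hnormbd n)
    rw [measureReal_def, hvol] at this
    calc (∫ τ in Set.Ioc (t - 1) (t + 1), ‖f n τ‖)
        ≤ ‖∫ τ in Set.Ioc (t - 1) (t + 1), ‖f n τ‖‖ := le_abs_self _
      _ ≤ C * (1 / 2) ^ n * 2 := this
  have hswap : ∑' n : ℕ, (∫ τ in Set.Ioc (t - 1) (t + 1), f n τ)
      = ∫ τ in Set.Ioc (t - 1) (t + 1), ∑' n : ℕ, f n τ :=
    integral_tsum_of_summable_integral_norm hint hsumint
  -- compute each integral
  have hval : ∀ n : ℕ, (∫ τ in Set.Ioc (t - 1) (t + 1), f n τ)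
      = ((n.factorial : ℝ))⁻¹ * d n * ((1 - (-1 : ℝ) ^ (n + 1)) / (n + 1)) := by
    intro n
    rw [← intervalIntegral.integral_of_le ht]
    have h1 : (fun τ => f n τ) = fun τ => (((n.factorial : ℝ))⁻¹ * d n) * (τ - t) ^ n := by
      funext τ; simp only [hf_def]; ring
    rw [h1, intervalIntegral.integral_const_mul]
    have h2 : (∫ τ in (t - 1)..(t + 1), (τ - t) ^ n)
        = ∫ x in (-1 : ℝ)..(1 : ℝ), x ^ n := by
      rw [intervalIntegral.integral_comp_sub_right (fun x => x ^ n) t]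
      norm_num
    rw [h2, integral_pow]
    norm_num
  have hgoal : ∫ τ in (t - 1)..(t + 1), q τ
      = ∑' n : ℕ, ((n.factorial : ℝ))⁻¹ * d n * ((1 - (-1 : ℝ) ^ (n + 1)) / (n + 1)) := by
    rw [intervalIntegral.integral_of_le ht, hqeq, ← hswap]
    exact tsum_congr hval
  set I : ℕ → ℝ := fun n => ((n.factorial : ℝ))⁻¹ * d n * ((1 - (-1 : ℝ) ^ (n + 1)) / (n + 1))
    with hI_def
  have heven : ∀ m : ℕ, I (2 * m) = 2 * (d (2 * m) / (((2 * m + 1).factorial : ℝ))) := by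
    intro m
    have hfact : (((2 * m + 1).factorial : ℝ)) = (2 * m + 1) * ((2 * m).factorial : ℝ) := by
      exact_mod_cast Nat.factorial_succ (2 * m)
    have hneg : (-1 : ℝ) ^ (2 * m + 1) = -1 := by
      rw [pow_succ, pow_mul]; norm_num
    have hm1 : (0 : ℝ) < ((2 * m).factorial : ℝ) := by positivity
    have hm2 : (0 : ℝ) < (2 * m + 1 : ℝ) := by positivity
    simp only [hI_def, hneg, hfact]
    push_cast
    field_simp
    ring
  have hodd : ∀ n : ℕ, n ∉ Set.range (fun m : ℕ => 2 * m) → I n = 0 := by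
    intro n hn
    have hodd' : Odd n := by
      rcases Nat.even_or_odd n with he | ho
      · obtain ⟨k, hk⟩ := he
        exact absurd ⟨k, show 2 * k = n by omega⟩ hn
      · exact ho
    obtain ⟨k, hk⟩ := hodd'
    have : (-1 : ℝ) ^ (n + 1) = 1 := by
      have : n + 1 = 2 * (k + 1) := by omega
      rw [this, pow_mul]; norm_num
    simp [hI_def, this]
  have htsum_eq : ∑' m : ℕ, I (2 * m) = ∑' n : ℕ, I n := by
    refine Function.Injective.tsum_eq (fun a b hab => by omega) ?_
    intro n hn
    simp only [Function.mem_support] at hn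
    by_contra hcon
    exact hn (hodd n hcon)
  have hfinal : ∑' m : ℕ, I (2 * m)
      = 2 * ∑' m : ℕ, d (2 * m) / (((2 * m + 1).factorial : ℝ)) := by
    rw [← tsum_mul_left]
    exact tsum_congr heven
  rw [hgoal, ← htsum_eq, hfinal]
  ring
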